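/- Let (W, 𝔄, μ) be a σ-finite measure space and C₁ ≥ 0. Let (v_k)_{k∈ℕ} ⊆ L²(μ) with ‖v_k‖_{L²(μ)} ≤ C₁ for all k, let (χ_k)_{k∈ℕ} be measurable functions on W with 0 ≤ χ_k ≤ 1 and χ_k v_k = v_k μ-a.e., and let θ : W → [0,1] be measurable. Assume v_k converges weakly in L²(μ) to some ṽ, and that ∫_W χ_k g dμ → ∫_W θ g dμ for every g ∈ L¹(μ). Then there exists a measurable function u : W → ℝ such that ṽ = θ·u μ-a.e. and ∫_W θ u² dμ ≤ C₁². -/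

import Mathlib

open MeasureTheory Set Filter ENNReal

lemma stmt5_cs {W : Type*} [MeasurableSpace W] (μ : Measure W) (f g : W → ℝ)
    (hf : MemLp f 2 μ) (hg : MemLp g 2 μ) :
    ∫ x, f x * g x ∂μ ≤ (eLpNorm f 2 μ).toReal * Real.sqrt (∫ x, g x ^ 2 ∂μ) := by
  set F : Lp ℝ 2 μ := hf.toLp f
  set G : Lp ℝ 2 μ := hg.toLp g
  have h1 : ∫ x, f x * g x ∂μ = (inner ℝ F G : ℝ) := by
    rw [L2.inner_def]
    refine integral_congr_ae ?_
    filter_upwards [hf.coeFn_toLp, hg.coeFn_toLp] with x hx hy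
    rw [hx, hy]
    simp [RCLike.inner_apply, mul_comm]
  have h2 : ‖F‖ = (eLpNorm f 2 μ).toReal := Lp.norm_toLp f hf
  have h3 : ‖G‖ = Real.sqrt (∫ x, g x ^ 2 ∂μ) := by
    have hsq : ‖G‖ ^ 2 = ∫ x, g x ^ 2 ∂μ := by
      rw [← real_inner_self_eq_norm_sq, L2.inner_def]
      refine integral_congr_ae ?_
      filter_upwards [hg.coeFn_toLp] with x hx
      rw [hx]
      simp [RCLike.inner_apply]
    rw [← hsq, Real.sqrt_sq (norm_nonneg G)]
  rw [h1, ← h2, ← h3]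
  exact real_inner_le_norm F G

/-- If `v_k ⇀ ṽ` weakly in `L²(μ)`, `‖v_k‖ ≤ C₁`, `0 ≤ χ_k ≤ 1`,
`χ_k v_k = v_k` a.e., and `∫ χ_k g → ∫ θ g` for every `g ∈ L¹(μ)`, then `ṽ = θ·u`
for some measurable `u` with `∫ θ u² ≤ C₁²`. -/
theorem stmt_5 {W : Type*} [MeasurableSpace W] (μ : Measure W) [SigmaFinite μ]
    (C₁ : ℝ) (hC₁ : 0 ≤ C₁)
    (v : ℕ → W → ℝ) (χ : ℕ → W → ℝ) (θ : W → ℝ) (vlim : W → ℝ)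
    (hv : ∀ k, MemLp (v k) 2 μ)
    (hvb : ∀ k, eLpNorm (v k) 2 μ ≤ ENNReal.ofReal C₁)
    (hχm : ∀ k, Measurable (χ k)) (hχ01 : ∀ k x, χ k x ∈ Set.Icc (0 : ℝ) 1)
    (hχv : ∀ k, (fun x => χ k x * v k x) =ᵐ[μ] v k)
    (hθm : Measurable θ) (hθ01 : ∀ x, θ x ∈ Set.Icc (0 : ℝ) 1)
    (hvlim : MemLp vlim 2 μ)
    (hweak : ∀ w : W → ℝ, MemLp w 2 μ →
      Tendsto (fun k => ∫ x, v k x * w x ∂μ) atTop (nhds (∫ x, vlim x * w x ∂μ)))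
    (hχlim : ∀ g : W → ℝ, Integrable g μ →
      Tendsto (fun k => ∫ x, χ k x * g x ∂μ) atTop (nhds (∫ x, θ x * g x ∂μ))) :
    ∃ u : W → ℝ, Measurable u ∧ (vlim =ᵐ[μ] fun x => θ x * u x) ∧
      ∫⁻ x, ENNReal.ofReal (θ x * u x ^ 2) ∂μ ≤ ENNReal.ofReal (C₁ ^ 2) := by
  -- per-k norm bound in ℝ
  have hvbR : ∀ k, (eLpNorm (v k) 2 μ).toReal ≤ C₁ := by
    intro k
    have := ENNReal.toReal_mono ENNReal.ofReal_ne_top (hvb k)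
    rwa [ENNReal.toReal_ofReal hC₁] at this
  -- Key inequality
  have keyA : ∀ w : W → ℝ, MemLp w 2 μ →
      ∫ x, vlim x * w x ∂μ ≤ C₁ * Real.sqrt (∫ x, θ x * w x ^ 2 ∂μ) := by
    intro w hw
    have hw2 : Integrable (fun x => w x ^ 2) μ := hw.integrable_sq
    have T1 := hweak w hw
    have T2 : Tendsto (fun k => C₁ * Real.sqrt (∫ x, χ k x * w x ^ 2 ∂μ)) atTop
        (nhds (C₁ * Real.sqrt (∫ x, θ x * w x ^ 2 ∂μ))) :=
      ((hχlim _ hw2).sqrt).const_mul C₁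
    refine le_of_tendsto_of_tendsto' T1 T2 ?_
    intro k
    have hχw : MemLp (fun x => χ k x * w x) 2 μ := by
      refine MemLp.of_le_mul (c := 1) hw ((hχm k).aestronglyMeasurable.mul hw.aestronglyMeasurable)
        (ae_of_all _ fun x => ?_)
      have h0 := (hχ01 k x).1
      have h1 := (hχ01 k x).2
      rw [norm_mul]
      have : ‖χ k x‖ ≤ 1 := by rw [Real.norm_eq_abs, abs_of_nonneg h0]; exact h1
      calc ‖χ k x‖ * ‖w x‖ ≤ 1 * ‖w x‖ := by
            exact mul_le_mul_of_nonneg_right this (norm_nonneg _)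
        _ = 1 * ‖w x‖ := rfl
    have step1 : ∫ x, v k x * w x ∂μ = ∫ x, v k x * (χ k x * w x) ∂μ := by
      refine integral_congr_ae ?_
      filter_upwards [hχv k] with x hx
      calc v k x * w x = (χ k x * v k x) * w x := by rw [hx]
        _ = v k x * (χ k x * w x) := by ring
    have step2 := stmt5_cs μ (v k) (fun x => χ k x * w x) (hv k) hχw
    have step3 : Real.sqrt (∫ x, (χ k x * w x) ^ 2 ∂μ) ≤
        Real.sqrt (∫ x, χ k x * w x ^ 2 ∂μ) := by
      refine Real.sqrt_le_sqrt ?_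
      refine integral_mono hχw.integrable_sq ?_ ?_
      · refine hw2.bdd_mul (c := 1) ((hχm k).aestronglyMeasurable) (ae_of_all _ fun x => ?_)
        rw [Real.norm_eq_abs, abs_of_nonneg (hχ01 k x).1]; exact (hχ01 k x).2
      · intro x
        have h0 := (hχ01 k x).1
        have h1 := (hχ01 k x).2
        have : χ k x ^ 2 ≤ χ k x := by nlinarith
        calc (χ k x * w x) ^ 2 = χ k x ^ 2 * w x ^ 2 := by ring
          _ ≤ χ k x * w x ^ 2 := mul_le_mul_of_nonneg_right this (sq_nonneg _)
    rw [step1]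
    calc ∫ x, v k x * (χ k x * w x) ∂μ
        ≤ (eLpNorm (v k) 2 μ).toReal * Real.sqrt (∫ x, (χ k x * w x) ^ 2 ∂μ) := step2
      _ ≤ C₁ * Real.sqrt (∫ x, χ k x * w x ^ 2 ∂μ) :=
          mul_le_mul (hvbR k) step3 (Real.sqrt_nonneg _) hC₁
  -- vlim vanishes a.e. on {θ = 0}
  have hvlim_sq : Integrable (fun x => vlim x ^ 2) μ := hvlim.integrable_sq
  set S : Set W := {x | θ x = 0} with hS
  have hSm : MeasurableSet S := hθm (measurableSet_singleton 0)
  have hzero : ∀ᵐ x ∂μ, θ x = 0 → vlim x = 0 := by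
    set w : W → ℝ := fun x => vlim x * S.indicator (fun _ => (1:ℝ)) x with hw
    have hwmem : MemLp w 2 μ := by
      refine MemLp.of_le_mul (c := 1) hvlim
        (hvlim.aestronglyMeasurable.mul
          ((measurable_const.indicator hSm).aestronglyMeasurable))
        (ae_of_all _ fun x => ?_)
      rw [norm_mul]
      have : ‖S.indicator (fun _ => (1:ℝ)) x‖ ≤ 1 := by
        by_cases hx : x ∈ S <;> simp [Set.indicator_of_mem, Set.indicator_of_notMem, hx]
      calc ‖vlim x‖ * ‖S.indicator (fun _ => (1:ℝ)) x‖ ≤ ‖vlim x‖ * 1 :=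
            mul_le_mul_of_nonneg_left this (norm_nonneg _)
        _ = 1 * ‖vlim x‖ := by ring
    have hA := keyA w hwmem
    have hrhs : (∫ x, θ x * w x ^ 2 ∂μ) = 0 := by
      have : ∀ x, θ x * w x ^ 2 = 0 := by
        intro x
        by_cases hx : x ∈ S
        · have : θ x = 0 := hx
          simp [this]
        · simp [hw, Set.indicator_of_notMem hx]
      simp [this]
    rw [hrhs, Real.sqrt_zero, mul_zero] at hA
    have hint : Integrable (fun x => vlim x * w x) μ := by
      refine hvlim_sq.mono (hvlim.aestronglyMeasurable.mul hwmem.aestronglyMeasurable)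
        (ae_of_all _ fun x => ?_)
      rw [Real.norm_eq_abs, Real.norm_eq_abs, abs_of_nonneg (sq_nonneg (vlim x))]
      have hb : |w x| ≤ |vlim x| := by
        by_cases hx : x ∈ S
        · simp [hw, Set.indicator_of_mem hx]
        · simp [hw, Set.indicator_of_notMem hx, abs_nonneg]
      calc |vlim x * w x| = |vlim x| * |w x| := abs_mul _ _
        _ ≤ |vlim x| * |vlim x| := mul_le_mul_of_nonneg_left hb (abs_nonneg _)
        _ = vlim x ^ 2 := by rw [← sq, sq_abs]
    have hnonneg : 0 ≤ᵐ[μ] fun x => vlim x * w x := by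
      refine ae_of_all _ fun x => ?_
      by_cases hx : x ∈ S
      · simp [hw, Set.indicator_of_mem hx, mul_one]; exact mul_self_nonneg _
      · simp [hw, Set.indicator_of_notMem hx]
    have heq0 : (fun x => vlim x * w x) =ᵐ[μ] 0 := by
      rw [← integral_eq_zero_iff_of_nonneg_ae hnonneg hint]
      exact le_antisymm hA (integral_nonneg_of_ae hnonneg)
    filter_upwards [heq0] with x hx hθx
    have hxS : x ∈ S := hθx
    simp [hw, Set.indicator_of_mem hxS, mul_one] at hx
    exact hx
  -- the measurable representative and u
  set vl : W → ℝ := hvlim.aestronglyMeasurable.mk vlim with hvl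
  have hvlm : Measurable vl := hvlim.aestronglyMeasurable.stronglyMeasurable_mk.measurable
  have hvleq : vlim =ᵐ[μ] vl := hvlim.aestronglyMeasurable.ae_eq_mk
  have hvlmem : MemLp vl 2 μ := hvlim.ae_eq hvleq
  set u : W → ℝ := fun x => vl x * (θ x)⁻¹ with hu
  have hum : Measurable u := hvlm.mul (hθm.inv)
  have hθu : vlim =ᵐ[μ] fun x => θ x * u x := by
    filter_upwards [hvleq, hzero] with x hx hz
    by_cases hθx : θ x = 0
    · simp [hu, hθx, hz hθx]
    · simp only [hu]
      rw [hx]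
      field_simp
  refine ⟨u, hum, hθu, ?_⟩
  -- exhaustion sets
  set E : ℕ → Set W := fun n => {x | ((n : ℝ) + 1)⁻¹ ≤ θ x} with hE
  have hEm : ∀ n, MeasurableSet (E n) := fun n => hθm measurableSet_Ici
  have hEmono : Monotone E := by
    intro m n hmn x hx
    have hx' : ((m : ℝ) + 1)⁻¹ ≤ θ x := hx
    have : ((n : ℝ) + 1)⁻¹ ≤ ((m : ℝ) + 1)⁻¹ :=
      inv_anti₀ (by positivity) (by gcongr)
    exact le_trans this hx'
  -- the truncated functions
  have hwn : ∀ n, MemLp ((E n).indicator u) 2 μ := by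
    intro n
    refine MemLp.of_le_mul (c := (n : ℝ) + 1) hvlmem
      ((hum.indicator (hEm n)).aestronglyMeasurable) (ae_of_all _ fun x => ?_)
    by_cases hx : x ∈ E n
    · rw [Set.indicator_of_mem hx]
      have hθx : ((n : ℝ) + 1)⁻¹ ≤ θ x := hx
      have hθpos : 0 < θ x := lt_of_lt_of_le (by positivity) hθx
      have hinv : (θ x)⁻¹ ≤ (n : ℝ) + 1 := by
        rw [inv_le_comm₀ hθpos (by positivity)]
        exact hθx
      rw [hu]
      simp only [Real.norm_eq_abs, abs_mul]
      calc |vl x| * |(θ x)⁻¹| ≤ |vl x| * ((n:ℝ)+1) := by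
            rw [abs_of_nonneg (le_of_lt (inv_pos.mpr hθpos))]
            exact mul_le_mul_of_nonneg_left hinv (abs_nonneg _)
        _ = ((n:ℝ)+1) * |vl x| := by ring
    · rw [Set.indicator_of_notMem hx]
      simp
      positivity
  -- bound for each n
  have hIn : ∀ n, ∫ x, θ x * ((E n).indicator u x) ^ 2 ∂μ ≤ C₁ ^ 2 := by
    intro n
    have hA := keyA _ (hwn n)
    have hLHS : ∫ x, vlim x * (E n).indicator u x ∂μ
        = ∫ x, θ x * ((E n).indicator u x) ^ 2 ∂μ := by
      refine integral_congr_ae ?_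
      filter_upwards [hθu] with x hx
      rw [hx]
      by_cases hmem : x ∈ E n
      · rw [Set.indicator_of_mem hmem]; ring
      · rw [Set.indicator_of_notMem hmem]; ring
    rw [hLHS] at hA
    set I := ∫ x, θ x * ((E n).indicator u x) ^ 2 ∂μ with hI
    have hInonneg : 0 ≤ I := by
      refine integral_nonneg fun x => ?_
      exact mul_nonneg (hθ01 x).1 (sq_nonneg _)
    nlinarith [Real.sq_sqrt hInonneg, Real.sqrt_nonneg I]
  -- integrability of the truncated integrands
  have hint_n : ∀ n, Integrable (fun x => θ x * ((E n).indicator u x) ^ 2) μ := by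
    intro n
    refine ((hwn n).integrable_sq).bdd_mul (c := 1) ?_ ?_
    · exact hθm.aestronglyMeasurable
    · refine ae_of_all _ fun x => ?_
      rw [Real.norm_eq_abs, abs_of_nonneg (hθ01 x).1]
      exact (hθ01 x).2
  -- monotone convergence
  set f : ℕ → W → ℝ≥0∞ := fun n x => ENNReal.ofReal (θ x * ((E n).indicator u x) ^ 2) with hf
  have hfm : ∀ n, Measurable (f n) := by
    intro n
    exact (hθm.mul ((hum.indicator (hEm n)).pow_const 2)).ennreal_ofReal
  have hfmono : Monotone f := by
    intro m n hmn x
    simp only [hf]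
    refine ENNReal.ofReal_le_ofReal ?_
    by_cases hx : x ∈ E m
    · rw [Set.indicator_of_mem hx, Set.indicator_of_mem (hEmono hmn hx)]
    · rw [Set.indicator_of_notMem hx]
      have : (0:ℝ) ≤ θ x * ((E n).indicator u x)^2 := mul_nonneg (hθ01 x).1 (sq_nonneg _)
      simpa using this
  have hfsup : ∀ x, (⨆ n, f n x) = ENNReal.ofReal (θ x * u x ^ 2) := by
    intro x
    by_cases hθx : θ x = 0
    · have : ∀ n, f n x = 0 := by intro n; simp [hf, hθx]
      simp [this, hθx]
    · have hθpos : 0 < θ x := lt_of_le_of_ne (hθ01 x).1 (Ne.symm hθx)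
      obtain ⟨n, hn⟩ := exists_nat_gt (θ x)⁻¹
      have hxE : x ∈ E n := by
        have : ((n:ℝ)+1)⁻¹ ≤ θ x := by
          rw [inv_le_comm₀ (by positivity) hθpos]
          exact le_of_lt (lt_trans hn (by linarith))
        exact this
      refine le_antisymm ?_ ?_
      · refine iSup_le fun m => ?_
        refine ENNReal.ofReal_le_ofReal ?_
        by_cases hx : x ∈ E m
        · rw [Set.indicator_of_mem hx]
        · rw [Set.indicator_of_notMem hx]
          have : (0:ℝ) ≤ θ x * u x ^2 := mul_nonneg (hθ01 x).1 (sq_nonneg _)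
          simpa using this
      · have : f n x = ENNReal.ofReal (θ x * u x ^ 2) := by
          simp [hf, Set.indicator_of_mem hxE]
        rw [← this]
        exact le_iSup (fun n => f n x) n
  have hmain : ∫⁻ x, ENNReal.ofReal (θ x * u x ^ 2) ∂μ = ⨆ n, ∫⁻ x, f n x ∂μ := by
    rw [← lintegral_iSup hfm hfmono]
    refine lintegral_congr fun x => (hfsup x).symm
  rw [hmain]
  refine iSup_le fun n => ?_
  have hof : ∫⁻ x, f n x ∂μ = ENNReal.ofReal (∫ x, θ x * ((E n).indicator u x) ^ 2 ∂μ) := by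
    rw [← ofReal_integral_eq_lintegral_ofReal (hint_n n)
      (ae_of_all _ fun x => mul_nonneg (hθ01 x).1 (sq_nonneg _))]
  rw [hof]
  exact ENNReal.ofReal_le_ofReal (hIn n)
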